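/- Let 𝒪 be an infinite order ideal in P = K[x_0,…,x_n] and let G be a homogeneous ∂𝒪-prebasis. Then G is a homogeneous ∂𝒪-basis if and only if for every d ≥ 0 and all r, s ∈ {0,…,n}, the graded formal multiplication matrices of G satisfy Χ_r^{(d+1)}·Χ_s^{(d)} = Χ_s^{(d+1)}·Χ_r^{(d)}. -/

import Mathlib

open MvPolynomial

namespace Border

/-- A term of `K[x_0, …, x_n]`, identified with its exponent vector. -/
abbrev Term (n : ℕ) := Fin (n + 1) →₀ ℕ

variable {n : ℕ}

/-- The (standard) degree of a term. -/
def tdeg (m : Term n) : ℕ := ∑ i, m i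

/-- An order ideal: a nonempty set of terms closed under divisors. -/
def IsOrderIdeal (O : Set (Term n)) : Prop :=
  O.Nonempty ∧ ∀ τ ∈ O, ∀ τ' : Term n, τ' ≤ τ → τ' ∈ O

/-- The border `∂𝒪 = (x_0·𝒪 ∪ ⋯ ∪ x_n·𝒪) ∖ 𝒪`. -/
def border (O : Set (Term n)) : Set (Term n) :=
  {σ | σ ∉ O ∧ ∃ r : Fin (n + 1), ∃ τ ∈ O, σ = τ + Finsupp.single r 1}

/-- Multiplicative set of a border term `σ`, with respect to a labeling `lab` of the border:
`𝒯_σ = {η : σ' ∤ η·σ for every border term σ' with a larger label}`. -/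
def mulSet (O : Set (Term n)) (lab : Term n → ℕ) (σ : Term n) : Set (Term n) :=
  {η | ∀ σ' ∈ border O, lab σ < lab σ' → ¬ σ' ≤ η + σ}

/-- The cone `C(σ) = {η·σ : η ∈ 𝒯_σ}`. -/
def cone (O : Set (Term n)) (lab : Term n → ℕ) (σ : Term n) : Set (Term n) :=
  (fun η => η + σ) '' mulSet O lab σ

/-- A labeling of the border which is injective and ordered increasingly by degree. -/
def DegOrderedLabeling (O : Set (Term n)) (lab : Term n → ℕ) : Prop :=
  Set.InjOn lab (border O) ∧
    ∀ σ ∈ border O, ∀ σ' ∈ border O, lab σ < lab σ' → tdeg σ ≤ tdeg σ'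

/-- Iterated border closures: `∂⁰𝒪 := 𝒪`, and the `(k+1)`-st closure adds the border. -/
def borderClosure (O : Set (Term n)) : ℕ → Set (Term n)
  | 0 => O
  | k + 1 => borderClosure O k ∪ border (borderClosure O k)

/-- The index `ind_𝒪(τ)`: the least `k` with `τ ∈ ∂^k𝒪`. -/
noncomputable def ind (O : Set (Term n)) (τ : Term n) : ℕ :=
  sInf {k | τ ∈ borderClosure O k}

/-- Degree-`d` part of a set of terms. -/
def Od (O : Set (Term n)) (d : ℕ) : Set (Term n) := {τ | τ ∈ O ∧ tdeg τ = d}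

variable {K : Type*} [Field K]

/-- The index of a nonzero polynomial: the maximal index of a term of its support. -/
noncomputable def indP (O : Set (Term n)) (f : MvPolynomial (Fin (n + 1)) K) : ℕ :=
  f.support.sup (ind O)

/-- A homogeneous `∂𝒪`-prebasis: a family `g σ = σ - Σ_{τ ∈ 𝒪_{deg σ}} c_{στ} τ`. -/
def IsPrebasis (O : Set (Term n)) (g : Term n → MvPolynomial (Fin (n + 1)) K) : Prop :=
  ∀ σ ∈ border O, ∀ τ ∈ (monomial σ (1 : K) - g σ).support, τ ∈ O ∧ tdeg τ = tdeg σ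

/-- The set of border reductors `𝒯G = {η·g_σ : σ ∈ ∂𝒪, η ∈ 𝒯_σ}`. -/
def reductors (O : Set (Term n)) (lab : Term n → ℕ)
    (g : Term n → MvPolynomial (Fin (n + 1)) K) : Set (MvPolynomial (Fin (n + 1)) K) :=
  {p | ∃ σ ∈ border O, ∃ η ∈ mulSet O lab σ, p = monomial η (1 : K) * g σ}

/-- The degree-`d` border reductors `𝒯G_d = 𝒯G ∩ P_d`. -/
def reductorsDeg (O : Set (Term n)) (lab : Term n → ℕ)
    (g : Term n → MvPolynomial (Fin (n + 1)) K) (d : ℕ) :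
    Set (MvPolynomial (Fin (n + 1)) K) :=
  reductors O lab g ∩ {p | p.IsHomogeneous d}

/-- One step of the border reduction relation `→_G`. -/
def Step (O : Set (Term n)) (lab : Term n → ℕ)
    (g : Term n → MvPolynomial (Fin (n + 1)) K)
    (f h : MvPolynomial (Fin (n + 1)) K) : Prop :=
  ∃ σ ∈ border O, ∃ η ∈ mulSet O lab σ, η + σ ∈ f.support ∧
    h = f - f.coeff (η + σ) • (monomial η (1 : K) * g σ)

/-- The border reduction relation `→⁺_G` (finitely many, possibly zero, steps). -/
def Reduces (O : Set (Term n)) (lab : Term n → ℕ)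
    (g : Term n → MvPolynomial (Fin (n + 1)) K) :
    MvPolynomial (Fin (n + 1)) K → MvPolynomial (Fin (n + 1)) K → Prop :=
  Relation.ReflTransGen (Step O lab g)

/-- The `K`-vector space spanned by a set of terms. -/
noncomputable def spanTerms (K : Type*) [Field K] (S : Set (Term n)) :
    Submodule K (MvPolynomial (Fin (n + 1)) K) :=
  Submodule.span K ((fun τ => monomial τ (1 : K)) '' S)

/-- The ideal `(G)` generated by a `∂𝒪`-prebasis. -/
noncomputable def idealG (O : Set (Term n)) (g : Term n → MvPolynomial (Fin (n + 1)) K) :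
    Ideal (MvPolynomial (Fin (n + 1)) K) :=
  Ideal.span (g '' border O)

/-- The degree-`d` part `I_d` of an ideal, as a `K`-vector subspace. -/
noncomputable def degPart (I : Ideal (MvPolynomial (Fin (n + 1)) K)) (d : ℕ) :
    Submodule K (MvPolynomial (Fin (n + 1)) K) :=
  Submodule.restrictScalars K I ⊓ homogeneousSubmodule (Fin (n + 1)) K d

/-- Homogeneous ideal. -/
def IsHomogeneousIdeal (I : Ideal (MvPolynomial (Fin (n + 1)) K)) : Prop :=
  ∀ f ∈ I, ∀ d : ℕ, homogeneousComponent d f ∈ I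

/-- `G` is a homogeneous `∂𝒪`-basis of `J`: it is a prebasis contained in `J` and for every
`d` one has `P_d = J_d ⊕ ⟨𝒪_d⟩`, i.e. the residue classes of `𝒪_d` are a basis of `P_d/J_d`. -/
def IsBorderBasisOf (O : Set (Term n)) (g : Term n → MvPolynomial (Fin (n + 1)) K)
    (J : Ideal (MvPolynomial (Fin (n + 1)) K)) : Prop :=
  IsPrebasis O g ∧ (∀ σ ∈ border O, g σ ∈ J) ∧
    ∀ d : ℕ, degPart J d ⊔ spanTerms K (Od O d) = homogeneousSubmodule (Fin (n + 1)) K d ∧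
      Disjoint (degPart J d) (spanTerms K (Od O d))

/-- An `m`-lower representation of `f` by `𝒯G`: `f = Σ c_j • η_j·g_{σ_j}` with distinct
pairs `(η_j, σ_j)`, `η_j ∈ 𝒯_{σ_j}` and `ind(η_j σ_j) ≤ m`. -/
def HasLRep (O : Set (Term n)) (lab : Term n → ℕ)
    (g : Term n → MvPolynomial (Fin (n + 1)) K)
    (f : MvPolynomial (Fin (n + 1)) K) (m : ℕ) : Prop :=
  ∃ (s : Finset (Term n × Term n)) (c : Term n × Term n → K),
    (∀ p ∈ s, p.2 ∈ border O ∧ p.1 ∈ mulSet O lab p.2 ∧ ind O (p.1 + p.2) ≤ m) ∧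
    f = ∑ p ∈ s, c p • (monomial p.1 (1 : K) * g p.2)

/-- An `m`-lower representation of `f` by `𝒯G_d`. -/
def HasLRepDeg (O : Set (Term n)) (lab : Term n → ℕ)
    (g : Term n → MvPolynomial (Fin (n + 1)) K)
    (f : MvPolynomial (Fin (n + 1)) K) (m d : ℕ) : Prop :=
  ∃ (s : Finset (Term n × Term n)) (c : Term n × Term n → K),
    (∀ p ∈ s, p.2 ∈ border O ∧ p.1 ∈ mulSet O lab p.2 ∧ ind O (p.1 + p.2) ≤ m ∧
      (monomial p.1 (1 : K) * g p.2).IsHomogeneous d) ∧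
    f = ∑ p ∈ s, c p • (monomial p.1 (1 : K) * g p.2)

/-- The subtype of terms of `𝒪` of degree `d`. -/
abbrev OdSub (O : Set (Term n)) (d : ℕ) : Type _ := {τ : Term n // τ ∈ Od O d}

lemma tdeg_component_lt {d : ℕ} (m : Term n) (h : tdeg m = d) (i : Fin (n + 1)) :
    m i < d + 1 := by
  have : m i ≤ tdeg m :=
    Finset.single_le_sum (f := fun j => m j) (fun j _ => Nat.zero_le _) (Finset.mem_univ i)
  omega

instance (O : Set (Term n)) (d : ℕ) : Finite (OdSub O d) := by
  have hinj : Function.Injective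
      (fun τ : OdSub O d => fun i : Fin (n + 1) =>
        (⟨τ.1 i, tdeg_component_lt τ.1 τ.2.2 i⟩ : Fin (d + 1))) := by
    intro a b hab
    apply Subtype.ext
    apply Finsupp.ext
    intro i
    simpa using congrArg Fin.val (congrFun hab i)
  exact Finite.of_injective _ hinj

noncomputable instance (O : Set (Term n)) (d : ℕ) : Fintype (OdSub O d) :=
  Fintype.ofFinite _

open scoped Classical in
/-- The `r`-th `d`-graded formal multiplication matrix of a prebasis `G`,
with rows indexed by `𝒪_{d+1}` and columns by `𝒪_d`. -/
noncomputable def multMatrix (O : Set (Term n))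
    (g : Term n → MvPolynomial (Fin (n + 1)) K) (r : Fin (n + 1)) (d : ℕ) :
    Matrix (OdSub O (d + 1)) (OdSub O d) K :=
  Matrix.of fun τ' τ =>
    if τ.1 + Finsupp.single r 1 ∈ O then
      (if τ.1 + Finsupp.single r 1 = τ'.1 then 1 else 0)
    else (monomial (τ.1 + Finsupp.single r 1) (1 : K)
            - g (τ.1 + Finsupp.single r 1)).coeff τ'.1

/-- The minimum degree of a border term. -/
noncomputable def minDegBorder (O : Set (Term n)) : ℕ := sInf (tdeg '' border O)

/-- The `d`-th Macaulay transformation `a^{⟨d⟩}`, computed greedily. -/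
noncomputable def macaulay : ℕ → ℕ → ℕ
  | 0, _ => 0
  | d + 1, a =>
    if a = 0 then 0
    else
      Nat.choose (sSup {k | Nat.choose k (d + 1) ≤ a} + 1) (d + 2) +
        macaulay d (a - Nat.choose (sSup {k | Nat.choose k (d + 1) ≤ a}) (d + 1))

/-- An ideal is generated in degrees `≤ m` if it is generated by its homogeneous
elements of degree `≤ m`. -/
def GeneratedInDegLE (I : Ideal (MvPolynomial (Fin (n + 1)) K)) (m : ℕ) : Prop :=
  I = Ideal.span {f | f ∈ I ∧ ∃ d ≤ m, f.IsHomogeneous d}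

/-! ### Auxiliary lemmas for the proof of `char_by_matrices` -/

section Aux

variable {K : Type*} [Field K]

lemma tdeg_add (a b : Term n) : tdeg (a + b) = tdeg a + tdeg b := by
  simp [tdeg, Finsupp.add_apply, Finset.sum_add_distrib]

lemma tdeg_single (r : Fin (n + 1)) : tdeg (Finsupp.single r 1 : Term n) = 1 := by
  simp [tdeg, Finsupp.single_apply]

lemma tdeg_eq_zero {m : Term n} : tdeg m = 0 ↔ m = 0 := by
  constructor
  · intro h
    ext i
    have := Finset.sum_eq_zero_iff.mp h i (Finset.mem_univ i)
    simpa using this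
  · rintro rfl; simp [tdeg]

lemma tdeg_eq_degree (m : Term n) : tdeg m = Finsupp.degree m := by
  rw [tdeg, Finsupp.degree]
  exact (Finset.sum_subset (Finset.subset_univ _) (by
    intro i _ h
    simpa using Finsupp.notMem_support_iff.mp h)).symm

lemma sub_single_add {m : Term n} {r : Fin (n + 1)} (h : m r ≠ 0) :
    (m - Finsupp.single r 1 : Term n) + Finsupp.single r 1 = m := by
  ext i
  rcases eq_or_ne r i with rfl | hne
  · simp [Finsupp.tsub_apply]; omega
  · simp [Finsupp.tsub_apply, Finsupp.single_apply, hne]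

lemma tdeg_sub_single {m : Term n} {r : Fin (n + 1)} (h : m r ≠ 0) :
    tdeg (m - Finsupp.single r 1 : Term n) + 1 = tdeg m := by
  have := congrArg tdeg (sub_single_add h)
  rwa [tdeg_add, tdeg_single] at this

lemma zero_mem_of_orderIdeal {O : Set (Term n)} (hO : IsOrderIdeal O) : (0 : Term n) ∈ O := by
  obtain ⟨τ, hτ⟩ := hO.1
  exact hO.2 τ hτ 0 zero_le

lemma isHomogeneous_of_support {p : MvPolynomial (Fin (n + 1)) K} {d : ℕ}
    (h : ∀ m ∈ p.support, tdeg m = d) : p.IsHomogeneous d := by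
  intro m hm
  have := h m (mem_support_iff.mpr hm)
  rw [tdeg_eq_degree] at this
  simpa [Finsupp.weight_apply, Finsupp.degree_apply, Finsupp.sum] using this

/-- Recover a polynomial supported on `𝒪_d` as a sum over the (finite) subtype `OdSub O d`. -/
lemma eq_sum_OdSub {O : Set (Term n)} {p : MvPolynomial (Fin (n + 1)) K} {d : ℕ}
    (hp : ∀ m ∈ p.support, m ∈ Od O d) :
    p = ∑ τ : OdSub O d, p.coeff τ.1 • monomial τ.1 (1 : K) := by
  apply MvPolynomial.ext
  intro m
  rw [coeff_sum]
  simp only [coeff_smul, coeff_monomial, smul_eq_mul, mul_ite, mul_one, mul_zero]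
  by_cases hm : m ∈ Od O d
  · rw [Finset.sum_eq_single (⟨m, hm⟩ : OdSub O d)]
    · simp
    · intro τ _ hτ
      rw [if_neg]
      intro h
      exact hτ (Subtype.ext h)
    · intro h; exact absurd (Finset.mem_univ _) h
  · have h0 : p.coeff m = 0 := by
      by_contra h
      exact hm (hp m (mem_support_iff.mpr h))
    rw [h0]
    symm
    apply Finset.sum_eq_zero
    intro τ _
    rw [if_neg]
    intro h
    exact hm (h ▸ τ.2)

lemma g_isHomogeneous {O : Set (Term n)} {g : Term n → MvPolynomial (Fin (n + 1)) K}
    (hg : IsPrebasis O g) {σ : Term n} (hσ : σ ∈ border O) :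
    (g σ).IsHomogeneous (tdeg σ) := by
  have h1 : (monomial σ (1 : K)).IsHomogeneous (tdeg σ) :=
    isHomogeneous_monomial _ (tdeg_eq_degree σ).symm
  have h2 : (monomial σ (1 : K) - g σ).IsHomogeneous (tdeg σ) :=
    isHomogeneous_of_support (fun m hm => (hg σ hσ m hm).2)
  have : g σ = monomial σ (1 : K) - (monomial σ (1 : K) - g σ) := by ring
  rw [this]
  exact h1.sub h2

lemma g_mem_idealG {O : Set (Term n)} {g : Term n → MvPolynomial (Fin (n + 1)) K}
    {σ : Term n} (hσ : σ ∈ border O) : g σ ∈ idealG O g :=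
  Ideal.subset_span ⟨σ, hσ, rfl⟩

lemma coeff_sum_OdSub {O : Set (Term n)} {d : ℕ} (f : OdSub O d → K) (τ : OdSub O d) :
    coeff τ.1 (∑ ρ : OdSub O d, f ρ • monomial ρ.1 (1 : K)) = f τ := by
  rw [coeff_sum]
  simp only [coeff_smul, coeff_monomial, smul_eq_mul, mul_ite, mul_one, mul_zero]
  rw [Finset.sum_eq_single τ]
  · simp
  · intro ρ _ hρ
    rw [if_neg]
    intro h
    exact hρ (Subtype.ext h)
  · simp

lemma X_mul_monomial' (s : Fin (n + 1)) (m : Term n) :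
    X s * monomial m (1 : K) = monomial (m + Finsupp.single s 1) (1 : K) := by
  rw [X, monomial_mul, one_mul, add_comm (Finsupp.single s 1) m]

/-- Key lemma: for `τ ∈ 𝒪_d`, the difference between `x_r·τ` and the polynomial given by
the `τ`-column of `Χ_r^{(d)}` lies in the ideal `(G)`. -/
lemma colsum_mem {O : Set (Term n)} {g : Term n → MvPolynomial (Fin (n + 1)) K}
    (hg : IsPrebasis O g) {d : ℕ} {τ : Term n} (hτ : τ ∈ Od O d) (r : Fin (n + 1)) :
    monomial (τ + Finsupp.single r 1) (1 : K)
      - ∑ τ' : OdSub O (d + 1), multMatrix O g r d τ' ⟨τ, hτ⟩ • monomial τ'.1 (1 : K)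
      ∈ idealG O g := by
  by_cases hmem : τ + Finsupp.single r 1 ∈ O
  · have hOd : τ + Finsupp.single r 1 ∈ Od O (d + 1) :=
      ⟨hmem, by rw [tdeg_add, tdeg_single, hτ.2]⟩
    have hsum : ∑ τ' : OdSub O (d + 1), multMatrix O g r d τ' ⟨τ, hτ⟩ • monomial τ'.1 (1 : K)
        = monomial (τ + Finsupp.single r 1) (1 : K) := by
      rw [Finset.sum_eq_single (⟨τ + Finsupp.single r 1, hOd⟩ : OdSub O (d + 1))]
      · simp [multMatrix, hmem]
      · intro τ' _ hne
        have h' : ¬ (τ + Finsupp.single r 1 = τ'.1) := fun h => hne (Subtype.ext h.symm)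
        simp [multMatrix, hmem, h']
      · simp
    rw [hsum, sub_self]
    exact Ideal.zero_mem _
  · have hσ : τ + Finsupp.single r 1 ∈ border O := ⟨hmem, r, τ, hτ.1, rfl⟩
    have hdeg : tdeg (τ + Finsupp.single r 1) = d + 1 := by rw [tdeg_add, tdeg_single, hτ.2]
    have hsupp : ∀ m ∈ (monomial (τ + Finsupp.single r 1) (1 : K)
        - g (τ + Finsupp.single r 1)).support, m ∈ Od O (d + 1) := by
      intro m hm
      obtain ⟨h1, h2⟩ := hg _ hσ m hm
      exact ⟨h1, by rw [h2, hdeg]⟩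
    have hsum : ∑ τ' : OdSub O (d + 1), multMatrix O g r d τ' ⟨τ, hτ⟩ • monomial τ'.1 (1 : K)
        = monomial (τ + Finsupp.single r 1) (1 : K) - g (τ + Finsupp.single r 1) := by
      conv_rhs => rw [eq_sum_OdSub hsupp]
      apply Finset.sum_congr rfl
      intro τ' _
      simp [multMatrix, hmem]
    rw [hsum]
    have h' : monomial (τ + Finsupp.single r 1) (1 : K)
        - (monomial (τ + Finsupp.single r 1) (1 : K) - g (τ + Finsupp.single r 1))
        = g (τ + Finsupp.single r 1) := by ring
    rw [h']
    exact g_mem_idealG hσ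

/-- Two-step version of `colsum_mem`, with the product matrix `Χ_s^{(d+1)}Χ_r^{(d)}`. -/
lemma colsum2_mem {O : Set (Term n)} {g : Term n → MvPolynomial (Fin (n + 1)) K}
    (hg : IsPrebasis O g) {d : ℕ} {τ : Term n} (hτ : τ ∈ Od O d) (r s : Fin (n + 1)) :
    monomial (τ + Finsupp.single r 1 + Finsupp.single s 1) (1 : K)
      - ∑ τ'' : OdSub O (d + 2),
          (multMatrix O g s (d + 1) * multMatrix O g r d) τ'' ⟨τ, hτ⟩ • monomial τ''.1 (1 : K)
      ∈ idealG O g := by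
  set A := multMatrix O g r d with hA
  set B := multMatrix O g s (d + 1) with hB
  have hsum2 : ∑ τ' : OdSub O (d + 1), A τ' ⟨τ, hτ⟩ •
        ∑ τ'' : OdSub O (d + 2), B τ'' τ' • monomial τ''.1 (1 : K)
      = ∑ τ'' : OdSub O (d + 2), (B * A) τ'' ⟨τ, hτ⟩ • monomial τ''.1 (1 : K) := by
    simp only [Finset.smul_sum, smul_smul]
    rw [Finset.sum_comm]
    apply Finset.sum_congr rfl
    intro τ'' _
    rw [Matrix.mul_apply, Finset.sum_smul]
    apply Finset.sum_congr rfl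
    intro τ' _
    rw [mul_comm]
  have key : monomial (τ + Finsupp.single r 1 + Finsupp.single s 1) (1 : K)
      - ∑ τ'' : OdSub O (d + 2), (B * A) τ'' ⟨τ, hτ⟩ • monomial τ''.1 (1 : K)
      = X s * (monomial (τ + Finsupp.single r 1) (1 : K)
          - ∑ τ' : OdSub O (d + 1), A τ' ⟨τ, hτ⟩ • monomial τ'.1 (1 : K))
        + ∑ τ' : OdSub O (d + 1), A τ' ⟨τ, hτ⟩ •
            (monomial (τ'.1 + Finsupp.single s 1) (1 : K)
              - ∑ τ'' : OdSub O (d + 2), B τ'' τ' • monomial τ''.1 (1 : K)) := by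
    rw [mul_sub, X_mul_monomial', Finset.mul_sum]
    simp only [mul_smul_comm, X_mul_monomial', smul_sub]
    rw [Finset.sum_sub_distrib, hsum2]
    abel
  rw [key]
  apply Ideal.add_mem
  · exact Ideal.mul_mem_left _ _ (colsum_mem hg hτ r)
  · apply Ideal.sum_mem
    intro τ' _
    exact Submodule.smul_of_tower_mem _ _ (colsum_mem hg τ'.2 s)

/-- Forward direction: a border basis has commuting formal multiplication matrices. -/
lemma commute_of_basis {O : Set (Term n)} {g : Term n → MvPolynomial (Fin (n + 1)) K}
    (hg : IsPrebasis O g) (hb : IsBorderBasisOf O g (idealG O g)) (d : ℕ) (r s : Fin (n + 1)) :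
    multMatrix O g r (d + 1) * multMatrix O g s d =
      multMatrix O g s (d + 1) * multMatrix O g r d := by
  ext τ'' τ
  set u := ∑ ρ : OdSub O (d + 2),
    (multMatrix O g r (d + 1) * multMatrix O g s d) ρ τ • monomial ρ.1 (1 : K) with hu_def
  set w := ∑ ρ : OdSub O (d + 2),
    (multMatrix O g s (d + 1) * multMatrix O g r d) ρ τ • monomial ρ.1 (1 : K) with hw_def
  have hu : monomial (τ.1 + Finsupp.single s 1 + Finsupp.single r 1) (1 : K) - u ∈ idealG O g :=
    colsum2_mem hg τ.2 s r
  have hw : monomial (τ.1 + Finsupp.single r 1 + Finsupp.single s 1) (1 : K) - w ∈ idealG O g :=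
    colsum2_mem hg τ.2 r s
  have heq : τ.1 + Finsupp.single s 1 + Finsupp.single r 1
      = τ.1 + Finsupp.single r 1 + Finsupp.single s 1 := add_right_comm _ _ _
  have huw : u - w ∈ idealG O g := by
    have := Ideal.sub_mem _ hw hu
    rw [heq] at this
    simpa using this
  have hdeg : ∀ ρ : OdSub O (d + 2), (monomial ρ.1 (1 : K)).IsHomogeneous (d + 2) := by
    intro ρ
    exact isHomogeneous_monomial _ (by rw [← tdeg_eq_degree]; exact ρ.2.2)
  have hhom : u - w ∈ homogeneousSubmodule (Fin (n + 1)) K (d + 2) := by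
    apply Submodule.sub_mem
    all_goals
      apply Submodule.sum_mem
      intro ρ _
      exact Submodule.smul_mem _ _ ((mem_homogeneousSubmodule _ _).mpr (hdeg ρ))
  have hspan : u - w ∈ spanTerms K (Od O (d + 2)) := by
    apply Submodule.sub_mem
    all_goals
      apply Submodule.sum_mem
      intro ρ _
      exact Submodule.smul_mem _ _ (Submodule.subset_span ⟨ρ.1, ρ.2, rfl⟩)
  have h0 : u - w = 0 := by
    have hd := (hb.2.2 (d + 2)).2
    exact (Submodule.disjoint_def.mp hd) _ ⟨huw, hhom⟩ hspan
  have := congrArg (coeff τ''.1) h0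
  rw [coeff_sub, hu_def, hw_def, coeff_sum_OdSub, coeff_sum_OdSub] at this
  have := sub_eq_zero.mp (by simpa using this)
  exact this

end Aux

/-! ### Backward direction: commuting matrices give a border basis -/

section Backward

variable {K : Type*} [Field K]

/-- Pick an index in the support of a nonzero term. -/
noncomputable def pickIdx (m : Term n) : Fin (n + 1) :=
  if h : m = 0 then 0 else m.support.min' (Finsupp.support_nonempty_iff.mpr h)

lemma pickIdx_spec {m : Term n} (h : m ≠ 0) : m (pickIdx m) ≠ 0 := by
  rw [pickIdx, dif_neg h]
  exact Finsupp.mem_support_iff.mp (Finset.min'_mem _ _)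

lemma pickIdx_single (r : Fin (n + 1)) : pickIdx (Finsupp.single r 1 : Term n) = r := by
  have h2 := pickIdx_spec (show (Finsupp.single r 1 : Term n) ≠ 0 by simp)
  rw [Finsupp.single_apply] at h2
  by_contra hc
  rw [if_neg (fun hh => hc hh.symm)] at h2
  exact h2 rfl

lemma tdeg_ne_zero {m : Term n} {d : ℕ} (h : tdeg m = d + 1) : m ≠ 0 := by
  intro h0
  rw [h0] at h
  simp [tdeg] at h

variable (O : Set (Term n)) (g : Term n → MvPolynomial (Fin (n + 1)) K)

/-- The coordinate vector of a term of degree `d` with respect to `𝒪_d`, computed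
greedily using the formal multiplication matrices. -/
noncomputable def vecOf : (d : ℕ) → Term n → (OdSub O d → K)
  | 0, m => fun τ => if m = τ.1 then 1 else 0
  | d + 1, m =>
    if tdeg m = d + 1 then
      (multMatrix O g (pickIdx m) d).mulVec (vecOf d (m - Finsupp.single (pickIdx m) 1))
    else 0

lemma vecOf_zero_of_ne {d : ℕ} {m : Term n} (h : tdeg m ≠ d) : vecOf O g d m = 0 := by
  cases d with
  | zero =>
    funext τ
    have hne : m ≠ τ.1 := fun heq => h (heq ▸ τ.2.2)
    simp [vecOf, hne]
  | succ d => rw [vecOf, if_neg h]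

lemma vecOf_succ {d : ℕ} {m : Term n} (h : tdeg m = d + 1) :
    vecOf O g (d + 1) m =
      (multMatrix O g (pickIdx m) d).mulVec (vecOf O g d (m - Finsupp.single (pickIdx m) 1)) := by
  rw [vecOf, if_pos h]

variable (Hcomm : ∀ (d : ℕ) (r s : Fin (n + 1)),
  multMatrix O g r (d + 1) * multMatrix O g s d =
    multMatrix O g s (d + 1) * multMatrix O g r d)

include Hcomm in
lemma vec_step (d : ℕ) : ∀ (m : Term n) (r : Fin (n + 1)), tdeg m = d + 1 → m r ≠ 0 →
    vecOf O g (d + 1) m =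
      (multMatrix O g r d).mulVec (vecOf O g d (m - Finsupp.single r 1)) := by
  induction d with
  | zero =>
    intro m r h hr
    have hm0 : (m - Finsupp.single r 1 : Term n) = 0 := by
      rw [← tdeg_eq_zero]
      have := tdeg_sub_single hr
      omega
    have hm : m = Finsupp.single r 1 := by
      have h2 := sub_single_add hr
      rw [hm0, zero_add] at h2
      exact h2.symm
    rw [vecOf_succ O g h, hm, pickIdx_single]
  | succ d IH =>
    intro m r h hr
    have hne : m ≠ 0 := tdeg_ne_zero h
    rw [vecOf_succ O g h]
    have hsspec : m (pickIdx m) ≠ 0 := pickIdx_spec hne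
    generalize hgen : pickIdx m = s at hsspec ⊢
    rcases eq_or_ne s r with rfl | hsr
    · rfl
    · have hms : tdeg (m - Finsupp.single s 1 : Term n) = d + 1 := by
        have := tdeg_sub_single hsspec; omega
      have hmr : tdeg (m - Finsupp.single r 1 : Term n) = d + 1 := by
        have := tdeg_sub_single hr; omega
      have hrs' : (m - Finsupp.single s 1 : Term n) r ≠ 0 := by
        rw [Finsupp.tsub_apply, Finsupp.single_apply, if_neg hsr]
        simpa using hr
      have hsr' : (m - Finsupp.single r 1 : Term n) s ≠ 0 := by
        rw [Finsupp.tsub_apply, Finsupp.single_apply, if_neg (fun hh => hsr hh.symm)]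
        simpa using hsspec
      have hcomm' : (m - Finsupp.single s 1 - Finsupp.single r 1 : Term n)
          = m - Finsupp.single r 1 - Finsupp.single s 1 := by
        ext i
        simp only [Finsupp.tsub_apply]
        omega
      rw [IH (m - Finsupp.single s 1) r hms hrs',
        IH (m - Finsupp.single r 1) s hmr hsr', hcomm', Matrix.mulVec_mulVec,
        Matrix.mulVec_mulVec, Hcomm]

lemma vec_O (hO : IsOrderIdeal O) {d : ℕ} {τ : Term n} (hτ : τ ∈ O) (hd : tdeg τ = d) :
    vecOf O g d τ = Pi.single (⟨τ, hτ, hd⟩ : OdSub O d) 1 := by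
  induction d generalizing τ with
  | zero =>
    funext τ'
    simp only [vecOf, Pi.single_apply]
    by_cases h : τ = τ'.1
    · rw [if_pos h, if_pos (Subtype.ext h.symm)]
    · rw [if_neg h, if_neg (fun hh => h (by rw [hh]))]
  | succ d IH =>
    have hne : τ ≠ 0 := tdeg_ne_zero hd
    rw [vecOf_succ O g hd]
    have hsp : τ (pickIdx τ) ≠ 0 := pickIdx_spec hne
    generalize hgen : pickIdx τ = s at hsp ⊢
    have hτ' : (τ - Finsupp.single s 1 : Term n) ∈ O := hO.2 τ hτ _ tsub_le_self
    have hd' : tdeg (τ - Finsupp.single s 1 : Term n) = d := by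
      have := tdeg_sub_single hsp; omega
    rw [IH hτ' hd', Matrix.mulVec_single_one]
    have hOin : (τ - Finsupp.single s 1 : Term n) + Finsupp.single s 1 ∈ O := by
      rw [sub_single_add hsp]; exact hτ
    funext τ'
    simp only [multMatrix, Matrix.col_apply, Matrix.of_apply, mul_one]
    rw [if_pos hOin, sub_single_add hsp, Pi.single_apply]
    by_cases h : τ = τ'.1
    · rw [if_pos h, if_pos (Subtype.ext h.symm)]
    · rw [if_neg h, if_neg (fun hh => h (by rw [hh]))]

include Hcomm in
lemma vec_border (hO : IsOrderIdeal O) {d : ℕ} {σ : Term n} (hσ : σ ∈ border O)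
    (hdeg : tdeg σ = d + 1) {τ₀ : Term n} {r : Fin (n + 1)} (hτ₀ : τ₀ ∈ O)
    (hστ : σ = τ₀ + Finsupp.single r 1) :
    vecOf O g (d + 1) σ = fun τ' : OdSub O (d + 1) =>
      (monomial σ (1 : K) - g σ).coeff τ'.1 := by
  have hr : σ r ≠ 0 := by
    rw [hστ]
    simp [Finsupp.add_apply, Finsupp.single_apply]
  have hsub : (σ - Finsupp.single r 1 : Term n) = τ₀ := by
    rw [hστ, add_tsub_cancel_right]
  have hd0 : tdeg τ₀ = d := by
    have h2 := hdeg
    rw [hστ, tdeg_add, tdeg_single] at h2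
    omega
  rw [vec_step O g Hcomm d σ r hdeg hr, hsub, vec_O O g hO hτ₀ hd0, Matrix.mulVec_single_one]
  have hnotO : τ₀ + Finsupp.single r 1 ∉ O := hστ ▸ hσ.1
  funext τ'
  simp only [multMatrix, Matrix.col_apply, Matrix.of_apply, mul_one]
  rw [if_neg hnotO, ← hστ]

/-- The coordinate map `Φ_d : P → K^{𝒪_d}`. -/
noncomputable def Phi (d : ℕ) : MvPolynomial (Fin (n + 1)) K →ₗ[K] (OdSub O d → K) :=
  Finsupp.linearCombination K (vecOf O g d) ∘ₗ (AddMonoidAlgebra.coeffLinearEquiv K).toLinearMap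

lemma Phi_monomial (d : ℕ) (m : Term n) (c : K) :
    Phi O g d (monomial m c) = c • vecOf O g d m := by
  show Finsupp.linearCombination K _ (AddMonoidAlgebra.coeffLinearEquiv K (monomial m c)) = _
  rw [show AddMonoidAlgebra.coeffLinearEquiv K (monomial m c) = Finsupp.single m c from rfl]
  exact Finsupp.linearCombination_single K c m

lemma Phi_zero_of (d : ℕ) {f : MvPolynomial (Fin (n + 1)) K}
    (h : ∀ m ∈ f.support, tdeg m ≠ d) : Phi O g d f = 0 := by
  conv_lhs => rw [as_sum f]
  rw [map_sum]
  apply Finset.sum_eq_zero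
  intro m hm
  rw [Phi_monomial, vecOf_zero_of_ne O g (h m hm), smul_zero]

lemma X_mul_monomial'' (r : Fin (n + 1)) (m : Term n) (c : K) :
    X r * monomial m c = monomial (m + Finsupp.single r 1) c := by
  rw [X, monomial_mul, one_mul, add_comm (Finsupp.single r 1) m]

include Hcomm in
lemma Phi_X_mul (d : ℕ) (r : Fin (n + 1)) (f : MvPolynomial (Fin (n + 1)) K) :
    Phi O g (d + 1) (X r * f) = (multMatrix O g r d).mulVec (Phi O g d f) := by
  induction f using MvPolynomial.induction_on' with
  | monomial m c =>
    rw [X_mul_monomial'', Phi_monomial, Phi_monomial, Matrix.mulVec_smul]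
    by_cases h : tdeg m = d
    · rw [vec_step O g Hcomm d (m + Finsupp.single r 1) r
        (by rw [tdeg_add, tdeg_single, h]) (by simp [Finsupp.add_apply, Finsupp.single_apply]),
        add_tsub_cancel_right]
    · simp [vecOf_zero_of_ne O g (d := d + 1) (m := m + Finsupp.single r 1)
        (by rw [tdeg_add, tdeg_single]; omega), vecOf_zero_of_ne O g h]
  | add p q hp hq => rw [mul_add, map_add, map_add, hp, hq, Matrix.mulVec_add]

lemma Phi_zero_X_mul (r : Fin (n + 1)) (f : MvPolynomial (Fin (n + 1)) K) :
    Phi O g 0 (X r * f) = 0 := by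
  induction f using MvPolynomial.induction_on' with
  | monomial m c =>
    rw [X_mul_monomial'', Phi_monomial,
      vecOf_zero_of_ne O g (by rw [tdeg_add, tdeg_single]; omega), smul_zero]
  | add p q hp hq => rw [mul_add, map_add, hp, hq, add_zero]

lemma Phi_suppOd (hO : IsOrderIdeal O) (d : ℕ) {f : MvPolynomial (Fin (n + 1)) K}
    (h : ∀ m ∈ f.support, m ∈ Od O d) :
    Phi O g d f = fun τ : OdSub O d => f.coeff τ.1 := by
  conv_lhs => rw [eq_sum_OdSub h]
  rw [map_sum]
  have hterm : ∀ τ : OdSub O d,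
      Phi O g d (f.coeff τ.1 • monomial τ.1 (1 : K)) = f.coeff τ.1 • (Pi.single τ (1 : K) : OdSub O d → K) := by
    intro τ
    rw [map_smul, Phi_monomial, one_smul, vec_O O g hO τ.2.1 τ.2.2]
  rw [Finset.sum_congr rfl (fun τ _ => hterm τ)]
  funext τ'
  rw [Finset.sum_apply]
  simp [Pi.single_apply]

include Hcomm in
lemma Phi_g (hO : IsOrderIdeal O) (hg : IsPrebasis O g) {σ : Term n} (hσ : σ ∈ border O)
    (d : ℕ) : Phi O g d (g σ) = 0 := by
  by_cases hd : tdeg σ = d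
  · obtain ⟨hnot, r, τ₀, hτ₀, hστ⟩ := hσ
    cases d with
    | zero =>
      exfalso
      rw [hστ, tdeg_add, tdeg_single] at hd
      omega
    | succ e =>
      have hkey : g σ = monomial σ (1 : K) - (monomial σ (1 : K) - g σ) := by ring
      have hsupp : ∀ m ∈ (monomial σ (1 : K) - g σ).support, m ∈ Od O (e + 1) := by
        intro m hm
        obtain ⟨h1, h2⟩ := hg σ ⟨hnot, r, τ₀, hτ₀, hστ⟩ m hm
        exact ⟨h1, by rw [h2, hd]⟩
      rw [hkey, map_sub, Phi_monomial, one_smul,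
        vec_border O g Hcomm hO ⟨hnot, r, τ₀, hτ₀, hστ⟩ hd hτ₀ hστ,
        Phi_suppOd O g hO _ hsupp, sub_self]
  · apply Phi_zero_of
    intro m hm
    have hh := g_isHomogeneous hg hσ
    have hdm : Finsupp.degree m = tdeg σ := by
      by_contra hc
      exact mem_support_iff.mp hm (hh.coeff_eq_zero hc)
    rw [tdeg_eq_degree, hdm]
    exact hd

include Hcomm in
lemma Phi_mon_mul_g (hO : IsOrderIdeal O) (hg : IsPrebasis O g) :
    ∀ (k : ℕ) (m : Term n), tdeg m = k → ∀ {σ : Term n}, σ ∈ border O →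
      ∀ d : ℕ, Phi O g d (monomial m (1 : K) * g σ) = 0 := by
  intro k
  induction k with
  | zero =>
    intro m hm σ hσ d
    rw [tdeg_eq_zero.mp hm]
    rw [show monomial (0 : Term n) (1 : K) = 1 by simp [monomial_zero'], one_mul]
    exact Phi_g O g Hcomm hO hg hσ d
  | succ k IH =>
    intro m hm σ hσ d
    have hne : m ≠ 0 := tdeg_ne_zero hm
    obtain ⟨r, hr⟩ := Finsupp.support_nonempty_iff.mpr hne
    replace hr : m r ≠ 0 := Finsupp.mem_support_iff.mp hr
    have hm' : tdeg (m - Finsupp.single r 1 : Term n) = k := by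
      have := tdeg_sub_single hr; omega
    have hfact : monomial m (1 : K) = X r * monomial (m - Finsupp.single r 1 : Term n) 1 := by
      rw [X_mul_monomial'', sub_single_add hr]
    rw [hfact, mul_assoc]
    cases d with
    | zero => exact Phi_zero_X_mul O g r _
    | succ e =>
      rw [Phi_X_mul O g Hcomm e r, IH (m - Finsupp.single r 1) hm' hσ e, Matrix.mulVec_zero]

include Hcomm in
lemma Phi_ideal (hO : IsOrderIdeal O) (hg : IsPrebasis O g)
    {f : MvPolynomial (Fin (n + 1)) K} (hf : f ∈ idealG O g) (d : ℕ) :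
    Phi O g d f = 0 := by
  have key : ∀ (m : Term n) (d : ℕ), Phi O g d (monomial m (1 : K) * f) = 0 := by
    refine Submodule.span_induction ?_ ?_ ?_ ?_ hf
    · rintro x ⟨σ, hσ, rfl⟩ m d
      exact Phi_mon_mul_g O g Hcomm hO hg (tdeg m) m rfl hσ d
    · intro m d
      rw [mul_zero, map_zero]
    · intro x y _ _ hx hy m d
      rw [mul_add, map_add, hx, hy, add_zero]
    · intro a x _ hx m d
      rw [smul_eq_mul]
      conv_lhs => rw [as_sum a]
      rw [Finset.sum_mul, Finset.mul_sum, map_sum]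
      apply Finset.sum_eq_zero
      intro m' _
      have hmono : monomial m' (coeff m' a) = coeff m' a • monomial m' (1 : K) := by
        rw [smul_monomial, smul_eq_mul, mul_one]
      have hterm : monomial m (1 : K) * (monomial m' (coeff m' a) * x)
          = coeff m' a • (monomial (m + m') (1 : K) * x) := by
        rw [hmono, ← mul_assoc, mul_smul_comm, smul_mul_assoc, monomial_mul, one_mul]
      rw [hterm, map_smul, hx (m + m') d, smul_zero]
  have := key 0 d
  rwa [show monomial (0 : Term n) (1 : K) = 1 by simp [monomial_zero'], one_mul] at this

/-- The projection `ψ_d(f) = Σ_τ Φ_d(f)_τ · τ` onto the span of `𝒪_d`. -/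
noncomputable def psi (d : ℕ) (f : MvPolynomial (Fin (n + 1)) K) :
    MvPolynomial (Fin (n + 1)) K :=
  ∑ τ : OdSub O d, Phi O g d f τ • monomial τ.1 (1 : K)

lemma psi_mem_span (d : ℕ) (f : MvPolynomial (Fin (n + 1)) K) :
    psi O g d f ∈ spanTerms K (Od O d) :=
  Submodule.sum_mem _ fun τ _ =>
    Submodule.smul_mem _ _ (Submodule.subset_span ⟨τ.1, τ.2, rfl⟩)

lemma psi_homogeneous (d : ℕ) (f : MvPolynomial (Fin (n + 1)) K) :
    psi O g d f ∈ homogeneousSubmodule (Fin (n + 1)) K d :=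
  Submodule.sum_mem _ fun τ _ =>
    Submodule.smul_mem _ _ ((mem_homogeneousSubmodule _ _).mpr
      (isHomogeneous_monomial _ (by rw [← tdeg_eq_degree]; exact τ.2.2)))

lemma psi_of_O (hO : IsOrderIdeal O) {d : ℕ} {τ : Term n} (hτ : τ ∈ O) (hd : tdeg τ = d) :
    psi O g d (monomial τ (1 : K)) = monomial τ (1 : K) := by
  rw [psi]
  have hPhi : Phi O g d (monomial τ (1 : K)) = Pi.single (⟨τ, hτ, hd⟩ : OdSub O d) 1 := by
    rw [Phi_monomial, one_smul, vec_O O g hO hτ hd]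
  rw [hPhi, Finset.sum_eq_single (⟨τ, hτ, hd⟩ : OdSub O d)]
  · rw [Pi.single_apply, if_pos rfl, one_smul]
  · intro τ' _ hne
    rw [Pi.single_apply, if_neg hne, zero_smul]
  · simp

include Hcomm in
/-- For `τ ∈ 𝒪_d`, the reduction of `x_r·τ` lies in the ideal. -/
lemma mon_sub_psi_border (hO : IsOrderIdeal O) (hg : IsPrebasis O g) {d : ℕ} {τ : Term n}
    (hτ : τ ∈ Od O d) (r : Fin (n + 1)) :
    monomial (τ + Finsupp.single r 1) (1 : K)
      - psi O g (d + 1) (monomial (τ + Finsupp.single r 1) (1 : K)) ∈ idealG O g := by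
  have hdeg : tdeg (τ + Finsupp.single r 1) = d + 1 := by
    rw [tdeg_add, tdeg_single, hτ.2]
  by_cases hmem : τ + Finsupp.single r 1 ∈ O
  · rw [psi_of_O O g hO hmem hdeg, sub_self]
    exact Ideal.zero_mem _
  · have hσ : τ + Finsupp.single r 1 ∈ border O := ⟨hmem, r, τ, hτ.1, rfl⟩
    have hsupp : ∀ m ∈ (monomial (τ + Finsupp.single r 1) (1 : K)
        - g (τ + Finsupp.single r 1)).support, m ∈ Od O (d + 1) := by
      intro m hm
      obtain ⟨h1, h2⟩ := hg _ hσ m hm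
      exact ⟨h1, by rw [h2, hdeg]⟩
    have hψ : psi O g (d + 1) (monomial (τ + Finsupp.single r 1) (1 : K))
        = monomial (τ + Finsupp.single r 1) (1 : K) - g (τ + Finsupp.single r 1) := by
      rw [psi]
      have hPhi : Phi O g (d + 1) (monomial (τ + Finsupp.single r 1) (1 : K))
          = fun τ' : OdSub O (d + 1) =>
              (monomial (τ + Finsupp.single r 1) (1 : K)
                - g (τ + Finsupp.single r 1)).coeff τ'.1 := by
        rw [Phi_monomial, one_smul]
        exact vec_border O g Hcomm hO hσ hdeg hτ.1 rfl
      rw [hPhi]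
      exact (eq_sum_OdSub hsupp).symm
    rw [hψ]
    have : monomial (τ + Finsupp.single r 1) (1 : K)
        - (monomial (τ + Finsupp.single r 1) (1 : K) - g (τ + Finsupp.single r 1))
        = g (τ + Finsupp.single r 1) := by ring
    rw [this]
    exact g_mem_idealG hσ

include Hcomm in
/-- Every monomial is congruent to its `𝒪`-reduction modulo `(G)`. -/
lemma mon_sub_psi_mem (hO : IsOrderIdeal O) (hg : IsPrebasis O g) :
    ∀ (d : ℕ) (m : Term n), tdeg m = d →
      monomial m (1 : K) - psi O g d (monomial m (1 : K)) ∈ idealG O g := by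
  intro d
  induction d with
  | zero =>
    intro m hm
    rw [tdeg_eq_zero.mp hm,
      psi_of_O O g hO (zero_mem_of_orderIdeal hO) (by simp [tdeg]), sub_self]
    exact Ideal.zero_mem _
  | succ d IH =>
    intro m hm
    have hne : m ≠ 0 := tdeg_ne_zero hm
    obtain ⟨r, hr⟩ := Finsupp.support_nonempty_iff.mpr hne
    replace hr : m r ≠ 0 := Finsupp.mem_support_iff.mp hr
    set m' : Term n := m - Finsupp.single r 1 with hm'def
    have hm' : tdeg m' = d := by
      have h2 := tdeg_sub_single hr
      rw [← hm'def] at h2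
      omega
    have hfact : monomial m (1 : K) = X r * monomial m' 1 := by
      rw [X_mul_monomial'', hm'def, sub_single_add hr]
    set a : OdSub O d → K := Phi O g d (monomial m' (1 : K)) with ha
    -- ψ of x_r·τ' summed against a equals ψ of m
    have hpsi_eq : ∑ τ : OdSub O d, a τ • psi O g (d + 1)
          (monomial (τ.1 + Finsupp.single r 1) (1 : K))
        = psi O g (d + 1) (monomial m (1 : K)) := by
      have hcol : ∀ τ : OdSub O d,
          Phi O g (d + 1) (monomial (τ.1 + Finsupp.single r 1) (1 : K))
            = (multMatrix O g r d).mulVec (Pi.single τ 1) := by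
        intro τ
        rw [show monomial (τ.1 + Finsupp.single r 1) (1 : K) = X r * monomial τ.1 1 from
          (X_mul_monomial'' r τ.1 1).symm, Phi_X_mul O g Hcomm, Phi_monomial, one_smul,
          vec_O O g hO τ.2.1 τ.2.2]
      have hm_phi : Phi O g (d + 1) (monomial m (1 : K))
          = (multMatrix O g r d).mulVec a := by
        rw [hfact, Phi_X_mul O g Hcomm, ha]
      simp only [psi, Finset.smul_sum, smul_smul, hcol, hm_phi]
      rw [Finset.sum_comm]
      apply Finset.sum_congr rfl
      intro τ'' _
      rw [← Finset.sum_smul]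
      congr 1
      rw [Matrix.mulVec]
      simp only [Matrix.mulVec_single_one, Matrix.col_apply, mul_one]
      rw [dotProduct]
      apply Finset.sum_congr rfl
      intro τ _
      rw [mul_comm]
    have hsplit : monomial m (1 : K) - psi O g (d + 1) (monomial m (1 : K))
        = X r * (monomial m' (1 : K) - psi O g d (monomial m' (1 : K)))
          + (X r * psi O g d (monomial m' (1 : K))
              - psi O g (d + 1) (monomial m (1 : K))) := by
      rw [hfact]; ring
    have hXpsi : X r * psi O g d (monomial m' (1 : K))
        = ∑ τ : OdSub O d, a τ • monomial (τ.1 + Finsupp.single r 1) (1 : K) := by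
      rw [psi, Finset.mul_sum]
      apply Finset.sum_congr rfl
      intro τ _
      rw [mul_smul_comm, X_mul_monomial'']
    rw [hsplit]
    apply Ideal.add_mem
    · exact Ideal.mul_mem_left _ _ (IH m' hm')
    · rw [hXpsi, ← hpsi_eq, ← Finset.sum_sub_distrib]
      apply Ideal.sum_mem
      intro τ _
      rw [← smul_sub]
      exact Submodule.smul_of_tower_mem _ _
        (mon_sub_psi_border O g Hcomm hO hg τ.2 r)

lemma support_subset_of_mem_spanTerms {S : Set (Term n)} {f : MvPolynomial (Fin (n + 1)) K}
    (hf : f ∈ spanTerms K S) : ∀ m ∈ f.support, m ∈ S := by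
  refine Submodule.span_induction ?_ ?_ ?_ ?_ hf
  · rintro x ⟨τ, hτ, rfl⟩ m hm
    classical
    rw [support_monomial, if_neg one_ne_zero, Finset.mem_singleton] at hm
    exact hm ▸ hτ
  · intro m hm
    simp at hm
  · intro x y _ _ hx hy m hm
    rcases Finset.mem_union.mp (MvPolynomial.support_add hm) with h | h
    · exact hx m h
    · exact hy m h
  · intro a x _ hx m hm
    exact hx m (MvPolynomial.support_smul hm)

include Hcomm in
lemma basis_of_commute (hO : IsOrderIdeal O) (hg : IsPrebasis O g) :
    IsBorderBasisOf O g (idealG O g) := by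
  refine ⟨hg, fun σ hσ => g_mem_idealG hσ, fun d => ⟨?_, ?_⟩⟩
  · apply le_antisymm
    · apply sup_le
      · exact inf_le_right
      · rw [spanTerms, Submodule.span_le]
        rintro x ⟨τ, hτ, rfl⟩
        exact (mem_homogeneousSubmodule _ _).mpr
          (isHomogeneous_monomial _ (by rw [← tdeg_eq_degree]; exact hτ.2))
    · intro f hf
      have hfh : f.IsHomogeneous d := (mem_homogeneousSubmodule _ _).mp hf
      rw [as_sum f]
      apply Submodule.sum_mem
      intro m hm
      have hdm : tdeg m = d := by
        have h2 := hfh (mem_support_iff.mp hm)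
        rw [tdeg_eq_degree]
        simpa [Finsupp.weight_apply, Finsupp.degree_apply, Finsupp.sum] using h2
      have hmono : monomial m (coeff m f)
          = coeff m f • ((monomial m (1 : K) - psi O g d (monomial m 1))
              + psi O g d (monomial m 1)) := by
        rw [sub_add_cancel, smul_monomial, smul_eq_mul, mul_one]
      rw [hmono]
      apply Submodule.smul_mem
      apply Submodule.add_mem
      · apply Submodule.mem_sup_left
        refine Submodule.mem_inf.mpr ⟨?_, ?_⟩
        · exact mon_sub_psi_mem O g Hcomm hO hg d m hdm
        · apply Submodule.sub_mem
          · exact (mem_homogeneousSubmodule _ _).mpr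
              (isHomogeneous_monomial _ (by rw [← tdeg_eq_degree]; exact hdm))
          · exact psi_homogeneous O g d _
      · exact Submodule.mem_sup_right (psi_mem_span O g d _)
  · rw [Submodule.disjoint_def]
    intro f hf1 hf2
    have hfI : f ∈ idealG O g := (Submodule.mem_inf.mp hf1).1
    have hsupp : ∀ m ∈ f.support, m ∈ Od O d := support_subset_of_mem_spanTerms hf2
    have h0 : Phi O g d f = 0 := Phi_ideal O g Hcomm hO hg hfI d
    have hcoeff : (fun τ : OdSub O d => f.coeff τ.1) = 0 := by
      rw [← Phi_suppOd O g hO d hsupp]; exact h0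
    apply MvPolynomial.ext
    intro m
    rw [coeff_zero]
    by_cases hm : m ∈ f.support
    · exact congrFun hcoeff ⟨m, hsupp m hm⟩
    · exact notMem_support_iff.mp hm
end Backward

/-- **Characterization by formal multiplication matrices.** `G` is a homogeneous
`∂𝒪`-basis iff all the graded formal multiplication matrices commute:
`Χ_r^{(d+1)}Χ_s^{(d)} = Χ_s^{(d+1)}Χ_r^{(d)}` for every `d ≥ 0` and all `r, s`. -/
theorem char_by_matrices (O : Set (Term n)) (hO : IsOrderIdeal O) (hinf : O.Infinite)
    (g : Term n → MvPolynomial (Fin (n + 1)) K) (hg : IsPrebasis O g) :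
    IsBorderBasisOf O g (idealG O g) ↔
      ∀ (d : ℕ) (r s : Fin (n + 1)),
        multMatrix O g r (d + 1) * multMatrix O g s d =
          multMatrix O g s (d + 1) * multMatrix O g r d := by
  constructor
  · intro hb d r s
    exact commute_of_basis hg hb d r s
  · intro h
    exact basis_of_commute O g h hO hg

end Border
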